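/- arXiv:1802.04656 — 2 statements merged into one kernel-verified Lean document; each statement's English description precedes it below -/
import Mathlib

section
/- Let $\omega$ be a $C^1$ vector field's scalar quantity (a $C^1$ function) defined on $\{z \in \mathbb{R}^2 : |z| > R_0\}$ satisfying: (a) $\int_{|z|>R_0} r|\nabla\omega|^2 \, d\mathcal{H}^2 < \infty$ where $r = |z|$, and (b) $|\nabla\omega(z)| \to 0$ uniformly as $|z| \to \infty$. Then $\int_{D_z} \frac{1}{|\xi - z|} |\nabla\omega(\xi)| \, d\mathcal{H}^2_\xi \to 0$ uniformly as $|z| \to \infty$, where $D_z = \{\xi \in \mathbb{R}^2 : |\xi - z| \le \frac{4}{5}|z|\}$. -/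
open MeasureTheory Real Set Metric
open scoped ENNReal NNReal

lemma lintegral_fun_norm_complex (g : ℝ → ℝ≥0∞) (hg : Measurable g) :
    (∫⁻ x : ℂ, g ‖x‖) = 2 * volume (ball (0:ℂ) 1) * ∫⁻ y in Ioi (0:ℝ), ENNReal.ofReal y * g y := by
  have h0 : ({0}ᶜ : Set ℂ) =ᵐ[volume] (univ : Set ℂ) := by
    rw [ae_eq_univ, compl_compl]
    exact measure_singleton 0
  have mp := (volume : Measure ℂ).measurePreserving_homeomorphUnitSphereProd
  calc ∫⁻ x : ℂ, g ‖x‖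
      = ∫⁻ x in ({0}ᶜ : Set ℂ), g ‖x‖ := by
        rw [setLIntegral_congr h0, setLIntegral_univ]
    _ = ∫⁻ x : ({0}ᶜ : Set ℂ), g ‖(x : ℂ)‖ ∂(volume.comap Subtype.val) :=
        (lintegral_subtype_comap (measurableSet_singleton 0).compl _).symm
    _ = ∫⁻ p : sphere (0:ℂ) 1 × Ioi (0:ℝ), g p.2
          ∂((volume : Measure ℂ).toSphere.prod
            (MeasureTheory.Measure.volumeIoiPow (Module.finrank ℝ ℂ - 1))) := by
        rw [← mp.lintegral_comp (f := fun p => g (p.2 : ℝ))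
          (hg.comp (measurable_subtype_coe.comp measurable_snd))]
        exact lintegral_congr fun x => by simp
    _ = 2 * volume (ball (0:ℂ) 1) * ∫⁻ y in Ioi (0:ℝ), ENNReal.ofReal y * g y := by
        rw [lintegral_prod (f := fun p : (sphere (0:ℂ) 1) × (Ioi (0:ℝ)) => g (p.2 : ℝ))
          ((hg.comp (measurable_subtype_coe.comp measurable_snd)).aemeasurable)]
        have inner : ∫⁻ y : Ioi (0:ℝ), g y ∂(MeasureTheory.Measure.volumeIoiPow
            (Module.finrank ℝ ℂ - 1)) = ∫⁻ y in Ioi (0:ℝ), ENNReal.ofReal y * g y := by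
          rw [MeasureTheory.Measure.volumeIoiPow,
            lintegral_withDensity_eq_lintegral_mul _
              ((measurable_subtype_coe.pow_const _).ennreal_ofReal)
              (g := fun y : Ioi (0:ℝ) => g ↑y) (hg.comp measurable_subtype_coe)]
          simp only [Pi.mul_apply]
          rw [lintegral_subtype_comap measurableSet_Ioi
            (fun y => ENNReal.ofReal (y ^ (Module.finrank ℝ ℂ - 1)) * g y)]
          refine setLIntegral_congr_fun measurableSet_Ioi (fun y hy => ?_)
          rw [Complex.finrank_real_complex]
          norm_num
        simp_rw [inner]
        rw [lintegral_const, MeasureTheory.Measure.toSphere_apply_univ,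
          Complex.finrank_real_complex]
        push_cast
        ring

lemma lintegral_ball_inv (r₁ : ℝ) (hr₁ : 0 < r₁) :
    (∫⁻ x : ℂ, (if ‖x‖ < r₁ then ENNReal.ofReal ‖x‖⁻¹ else 0))
      = 2 * volume (ball (0:ℂ) 1) * ENNReal.ofReal r₁ := by
  set g : ℝ → ℝ≥0∞ := fun y => if y < r₁ then ENNReal.ofReal y⁻¹ else 0 with hgdef
  have hg : Measurable g := Measurable.ite measurableSet_Iio
    measurable_inv.ennreal_ofReal measurable_const
  have := lintegral_fun_norm_complex g hg
  rw [show (∫⁻ x : ℂ, g ‖x‖) = ∫⁻ x : ℂ, (if ‖x‖ < r₁ then ENNReal.ofReal ‖x‖⁻¹ else 0) from rfl]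
    at this
  rw [this]
  congr 1
  have : ∀ y ∈ Ioi (0:ℝ), ENNReal.ofReal y * g y = (Iio r₁).indicator (fun _ => 1) y := by
    intro y hy
    simp only [hgdef, indicator, mem_Iio]
    by_cases h : y < r₁
    · simp only [h, if_true, ← ENNReal.ofReal_mul (le_of_lt hy),
        mul_inv_cancel₀ (ne_of_gt (mem_Ioi.mp hy)), ENNReal.ofReal_one]
    · simp [h]
  rw [setLIntegral_congr_fun measurableSet_Ioi this,
    lintegral_indicator measurableSet_Iio, setLIntegral_one,
    Measure.restrict_apply measurableSet_Iio, Iio_inter_Ioi, Real.volume_Ioo, sub_zero]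

lemma lintegral_compl_ball_inv_cube (r₁ : ℝ) (hr₁ : 0 < r₁) :
    (∫⁻ x : ℂ, (if r₁ ≤ ‖x‖ then ENNReal.ofReal (‖x‖^3)⁻¹ else 0))
      = 2 * volume (ball (0:ℂ) 1) * ENNReal.ofReal r₁⁻¹ := by
  set g : ℝ → ℝ≥0∞ := fun y => if r₁ ≤ y then ENNReal.ofReal (y^3)⁻¹ else 0 with hgdef
  have hg : Measurable g := Measurable.ite measurableSet_Ici
    ((measurable_id.pow_const 3).inv.ennreal_ofReal) measurable_const
  have := lintegral_fun_norm_complex g hg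
  rw [show (∫⁻ x : ℂ, g ‖x‖) = ∫⁻ x : ℂ, (if r₁ ≤ ‖x‖ then ENNReal.ofReal (‖x‖^3)⁻¹ else 0)
    from rfl] at this
  rw [this]
  congr 1
  have h1 : ∀ y ∈ Ioi (0:ℝ), ENNReal.ofReal y * g y
      = (Ici r₁).indicator (fun y => ENNReal.ofReal (y^2)⁻¹) y := by
    intro y hy
    have hy0 : (0:ℝ) < y := hy
    simp only [hgdef, indicator, mem_Ici]
    by_cases h : r₁ ≤ y
    · simp only [h, if_true, ← ENNReal.ofReal_mul hy0.le]
      congr 1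
      field_simp
    · simp [h]
  rw [setLIntegral_congr_fun measurableSet_Ioi h1,
    lintegral_indicator measurableSet_Ici, Measure.restrict_restrict measurableSet_Ici]
  have h2 : Ici r₁ ∩ Ioi (0:ℝ) = Ici r₁ := by
    apply inter_eq_left.mpr
    exact fun y hy => lt_of_lt_of_le hr₁ hy
  rw [h2, Measure.restrict_congr_set Ioi_ae_eq_Ici.symm]
  have hint : IntegrableOn (fun y : ℝ => (y^2)⁻¹) (Ioi r₁) := by
    refine (integrableOn_Ioi_rpow_of_lt (by norm_num : (-2:ℝ) < -1) hr₁).congr_fun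
      (fun y hy => ?_) measurableSet_Ioi
    have hy0 : (0:ℝ) < y := lt_trans hr₁ hy
    rw [← Real.rpow_natCast y 2, ← Real.rpow_neg hy0.le]
    norm_num
  rw [← ofReal_integral_eq_lintegral_ofReal hint
    (ae_of_all _ (fun y => by positivity))]
  congr 1
  have := integral_Ioi_rpow_of_lt (by norm_num : (-2:ℝ) < -1) hr₁
  have heq : ∫ y in Ioi r₁, (y^2)⁻¹ = ∫ y in Ioi r₁, y ^ (-2:ℝ) := by
    refine setIntegral_congr_fun measurableSet_Ioi (fun y hy => ?_)
    have hy0 : (0:ℝ) < y := lt_trans hr₁ hy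
    rw [← Real.rpow_natCast y 2, ← Real.rpow_neg hy0.le]
    norm_num
  rw [heq, this]
  rw [show (-2:ℝ) + 1 = -1 by norm_num, Real.rpow_neg_one]
  field_simp

lemma amgm_aux {r a : ℝ} (hr : 0 < r) (ha : 0 ≤ a) :
    1 / r * a ≤ (r^3)⁻¹ + r * a^2 := by
  have key : a * r^2 ≤ 1 + r^4 * a^2 := by nlinarith [sq_nonneg (r^2 * a - 1)]
  have h3 : (0:ℝ) < r^3 := by positivity
  calc 1 / r * a = (a * r^2) / r^3 := by field_simp
    _ ≤ (1 + r^4 * a^2) / r^3 := by gcongr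
    _ = (r^3)⁻¹ + r * a^2 := by field_simp

lemma tail_small (h : ℂ → ℝ≥0∞) (T : Set ℂ) (hT : MeasurableSet T)
    (hfin : (∫⁻ ξ in T, h ξ) < ⊤) :
    ∀ ε : ℝ≥0∞, 0 < ε → ∃ S₀ : ℝ, ∀ S, S₀ ≤ S →
      (∫⁻ ξ in {ξ : ℂ | S ≤ ‖ξ‖} ∩ T, h ξ) < ε := by
  intro ε hε
  set ν : Measure ℂ := (volume.restrict T).withDensity h with hν
  have hν_apply : ∀ s : Set ℂ, MeasurableSet s → ν s = ∫⁻ ξ in s ∩ T, h ξ := by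
    intro s hs
    rw [hν, withDensity_apply _ hs, Measure.restrict_restrict hs]
  have hν_fin : ν univ ≠ ⊤ := by
    rw [hν_apply univ MeasurableSet.univ, univ_inter]
    exact hfin.ne
  set C : ℕ → Set ℂ := fun n => {ξ : ℂ | (n:ℝ) ≤ ‖ξ‖} with hC
  have hCm : ∀ n, MeasurableSet (C n) := fun n =>
    measurableSet_le measurable_const measurable_norm
  have hmono : Antitone C := by
    intro m n hmn ξ hξ
    exact le_trans ((Nat.cast_le (α := ℝ)).mpr hmn) hξ
  have hInter : ⋂ n, C n = ∅ := by
    ext ξ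
    simp only [mem_iInter, mem_empty_iff_false, iff_false, not_forall]
    obtain ⟨n, hn⟩ := exists_nat_gt ‖ξ‖
    exact ⟨n, by simp only [hC, mem_setOf_eq]; exact not_le.mpr hn⟩
  have htends := tendsto_measure_iInter_atTop (μ := ν) (fun n => (hCm n).nullMeasurableSet)
    hmono ⟨0, by exact ne_top_of_le_ne_top hν_fin (measure_mono (subset_univ _))⟩
  rw [hInter] at htends
  simp only [measure_empty] at htends
  obtain ⟨n, hn⟩ := (htends.eventually_lt_const hε).exists
  refine ⟨(n:ℝ), fun S hS => ?_⟩
  have hsub : {ξ : ℂ | S ≤ ‖ξ‖} ⊆ C n := fun ξ hξ => le_trans hS hξ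
  calc (∫⁻ ξ in {ξ : ℂ | S ≤ ‖ξ‖} ∩ T, h ξ)
      = ν {ξ : ℂ | S ≤ ‖ξ‖} :=
        (hν_apply _ (measurableSet_le measurable_const measurable_norm)).symm
    _ ≤ ν (C n) := measure_mono hsub
    _ < ε := hn

/-- Lemma 3.2: if the weighted Dirichlet-type integral `∫ r|∇ω|²` is finite on the
exterior domain `{|z| > R₀}` and `|∇ω| → 0` uniformly at infinity, then
`∫_{D_z} |∇ω(ξ)|/|ξ - z| dξ → 0` uniformly as `|z| → ∞`, where
`D_z = {ξ : |ξ - z| ≤ (4/5)|z|}`. -/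
theorem weighted_gradient_integral_tendsto_zero
    (ω : ℂ → ℝ) (R₀ : ℝ) (hR₀ : 0 < R₀)
    (hsmooth : ContDiffOn ℝ 1 ω {z : ℂ | R₀ < ‖z‖})
    (hdir : IntegrableOn (fun z : ℂ => ‖z‖ * ‖fderiv ℝ ω z‖ ^ 2) {z : ℂ | R₀ < ‖z‖})
    (hgrad : ∀ ε > (0:ℝ), ∃ R : ℝ, ∀ z : ℂ, R ≤ ‖z‖ → ‖fderiv ℝ ω z‖ < ε) :
    ∀ ε > (0:ℝ), ∃ R : ℝ, R₀ < R ∧ ∀ z : ℂ, R ≤ ‖z‖ →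
      (∫ ξ in {ξ : ℂ | dist ξ z ≤ 4 / 5 * ‖z‖}, (1 / dist ξ z) * ‖fderiv ℝ ω ξ‖) < ε := by
  intro ε hε
  set c : ℝ≥0∞ := volume (ball (0:ℂ) 1) with hc
  have hc_fin : 2 * c ≠ ⊤ := ENNReal.mul_ne_top (by norm_num) measure_ball_lt_top.ne
  set cR : ℝ := (2 * c).toReal with hcR
  have hcR0 : 0 ≤ cR := ENNReal.toReal_nonneg
  have h2c : 2 * c = ENNReal.ofReal cR := (ENNReal.ofReal_toReal hc_fin).symm
  set r₁ : ℝ := 3 * (cR + 1) / ε with hr₁def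
  have hr₁ : 0 < r₁ := by positivity
  set δ : ℝ := ε / (3 * (cR * r₁ + 1)) with hδdef
  have hδ : 0 < δ := by positivity
  obtain ⟨Rg, hRg⟩ := hgrad δ hδ
  set T : Set ℂ := {ξ : ℂ | R₀ < ‖ξ‖} with hT
  have hTm : MeasurableSet T := measurableSet_lt measurable_const measurable_norm
  have ham : Measurable fun ξ : ℂ => ‖fderiv ℝ ω ξ‖ := (measurable_fderiv ℝ ω).norm
  set h : ℂ → ℝ≥0∞ := fun ξ => ENNReal.ofReal (‖ξ‖ * ‖fderiv ℝ ω ξ‖ ^ 2) with hh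
  have hfin : (∫⁻ ξ in T, h ξ) < ⊤ := by
    refine lt_of_le_of_lt (lintegral_mono fun ξ => ?_) hdir.2
    exact Real.ofReal_le_enorm _
  obtain ⟨S₀, hS₀⟩ := tail_small h T hTm hfin (ENNReal.ofReal (ε/12))
    (ENNReal.ofReal_pos.mpr (by positivity))
  refine ⟨max (max (5*S₀) (5*R₀+1)) (Rg + r₁), ?_, ?_⟩
  · calc R₀ < 5*R₀+1 := by linarith
      _ ≤ _ := le_trans (le_max_right _ _) (le_max_left _ _)
  intro z hz
  have hz5S₀ : S₀ ≤ ‖z‖/5 := by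
    have := le_trans (le_trans (le_max_left _ _) (le_max_left _ _)) hz
    linarith
  have hzR₀ : R₀ < ‖z‖/5 := by
    have := le_trans (le_trans (le_max_right _ _) (le_max_left _ _)) hz
    linarith
  have hzRg : Rg + r₁ ≤ ‖z‖ := le_trans (le_max_right _ _) hz
  have hz0 : 0 < ‖z‖ := by linarith
  set D : Set ℂ := closedBall z (4/5*‖z‖) with hD
  have hDset : {ξ : ℂ | dist ξ z ≤ 4 / 5 * ‖z‖} = D := rfl
  set A : Set ℂ := D \ ball z r₁ with hA
  have hAm : MeasurableSet A := measurableSet_closedBall.diff measurableSet_ball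
  have hfm : Measurable fun ξ : ℂ => 1 / dist ξ z * ‖fderiv ℝ ω ξ‖ :=
    (measurable_const.div (measurable_id.dist measurable_const)).mul ham
  have hdistlow : ∀ ξ ∈ D, ‖z‖/5 ≤ ‖ξ‖ := by
    intro ξ hξ
    have h1 : dist ξ z ≤ 4/5*‖z‖ := mem_closedBall.mp hξ
    have h2 : |‖ξ‖ - ‖z‖| ≤ ‖ξ - z‖ := abs_norm_sub_norm_le ξ z
    rw [dist_eq_norm] at h1
    rw [abs_le] at h2
    linarith [h2.1]
  -- the ball piece
  have hball : (∫⁻ ξ in ball z r₁, ENNReal.ofReal (1 / dist ξ z * ‖fderiv ℝ ω ξ‖))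
      < ENNReal.ofReal (ε/3) := by
    have hb1 : ∀ ξ ∈ ball z r₁, ENNReal.ofReal (1 / dist ξ z * ‖fderiv ℝ ω ξ‖)
        ≤ ENNReal.ofReal (δ * (dist ξ z)⁻¹) := by
      intro ξ hξ
      apply ENNReal.ofReal_le_ofReal
      have h3 : ‖ξ - z‖ < r₁ := by rw [← dist_eq_norm]; exact mem_ball.mp hξ
      have h2 : |‖ξ‖ - ‖z‖| ≤ ‖ξ - z‖ := abs_norm_sub_norm_le ξ z
      rw [abs_le] at h2
      have haξ : ‖fderiv ℝ ω ξ‖ < δ := hRg ξ (by linarith [h2.1])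
      rw [one_div]
      calc (dist ξ z)⁻¹ * ‖fderiv ℝ ω ξ‖ ≤ (dist ξ z)⁻¹ * δ :=
            mul_le_mul_of_nonneg_left haξ.le (inv_nonneg.mpr dist_nonneg)
        _ = δ * (dist ξ z)⁻¹ := mul_comm _ _
    calc (∫⁻ ξ in ball z r₁, ENNReal.ofReal (1 / dist ξ z * ‖fderiv ℝ ω ξ‖))
        ≤ ∫⁻ ξ in ball z r₁, ENNReal.ofReal (δ * (dist ξ z)⁻¹) :=
          setLIntegral_mono' measurableSet_ball hb1
      _ = ENNReal.ofReal δ * ∫⁻ ξ in ball z r₁, ENNReal.ofReal (dist ξ z)⁻¹ := by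
          simp_rw [ENNReal.ofReal_mul hδ.le]
          exact lintegral_const_mul' _ _ ENNReal.ofReal_ne_top
      _ = ENNReal.ofReal δ * (2 * c * ENNReal.ofReal r₁) := by
          congr 1
          have hind : ∀ ξ : ℂ, (ball z r₁).indicator
              (fun ξ => ENNReal.ofReal (dist ξ z)⁻¹) ξ
              = (if ‖ξ - z‖ < r₁ then ENNReal.ofReal ‖ξ - z‖⁻¹ else 0) := by
            intro ξ
            rw [indicator]
            by_cases hmem : ξ ∈ ball z r₁
            · rw [if_pos hmem, if_pos (by rw [← dist_eq_norm]; exact mem_ball.mp hmem),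
                dist_eq_norm]
            · have hnot : ¬ ‖ξ - z‖ < r₁ := by
                rw [← dist_eq_norm]
                exact fun hcon => hmem (mem_ball.mpr hcon)
              rw [if_neg hmem, if_neg hnot]
          rw [← lintegral_indicator measurableSet_ball, lintegral_congr hind,
            lintegral_sub_right_eq_self
              (fun x : ℂ => (if ‖x‖ < r₁ then ENNReal.ofReal ‖x‖⁻¹ else 0)) z,
            lintegral_ball_inv r₁ hr₁]
      _ = ENNReal.ofReal (δ * (cR * r₁)) := by
          rw [h2c, ← ENNReal.ofReal_mul hcR0, ← ENNReal.ofReal_mul hδ.le]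
      _ < ENNReal.ofReal (ε/3) := by
          rw [ENNReal.ofReal_lt_ofReal_iff (by positivity)]
          have hq : 0 ≤ cR * r₁ := by positivity
          rw [hδdef, div_mul_eq_mul_div, div_lt_div_iff₀ (by positivity) (by norm_num)]
          nlinarith
  -- annulus pointwise bound and split
  have hannsplit : (∫⁻ ξ in A, ENNReal.ofReal (1 / dist ξ z * ‖fderiv ℝ ω ξ‖))
      ≤ (∫⁻ ξ in A, ENNReal.ofReal ((dist ξ z ^ 3)⁻¹))
        + ∫⁻ ξ in A, ENNReal.ofReal (dist ξ z * ‖fderiv ℝ ω ξ‖ ^ 2) := by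
    have hstep : ∀ ξ ∈ A, ENNReal.ofReal (1 / dist ξ z * ‖fderiv ℝ ω ξ‖)
        ≤ ENNReal.ofReal ((dist ξ z ^ 3)⁻¹) + ENNReal.ofReal (dist ξ z * ‖fderiv ℝ ω ξ‖ ^ 2) := by
      intro ξ hξ
      have h1 : r₁ ≤ dist ξ z := not_lt.mp (fun hcon => hξ.2 (mem_ball.mpr hcon))
      have h0 : 0 < dist ξ z := lt_of_lt_of_le hr₁ h1
      rw [← ENNReal.ofReal_add (by positivity) (by positivity)]
      exact ENNReal.ofReal_le_ofReal (amgm_aux h0 (norm_nonneg _))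
    calc (∫⁻ ξ in A, ENNReal.ofReal (1 / dist ξ z * ‖fderiv ℝ ω ξ‖))
        ≤ ∫⁻ ξ in A, (ENNReal.ofReal ((dist ξ z ^ 3)⁻¹)
            + ENNReal.ofReal (dist ξ z * ‖fderiv ℝ ω ξ‖ ^ 2)) :=
          setLIntegral_mono' hAm hstep
      _ = _ := lintegral_add_left
          (((measurable_id.dist measurable_const).pow_const 3).inv.ennreal_ofReal) _
  -- annulus piece 1
  have hB1 : (∫⁻ ξ in A, ENNReal.ofReal ((dist ξ z ^ 3)⁻¹)) < ENNReal.ofReal (ε/3) := by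
    calc (∫⁻ ξ in A, ENNReal.ofReal ((dist ξ z ^ 3)⁻¹))
        = ∫⁻ ξ : ℂ, A.indicator (fun ξ => ENNReal.ofReal ((dist ξ z ^ 3)⁻¹)) ξ :=
          (lintegral_indicator hAm _).symm
      _ ≤ ∫⁻ ξ : ℂ, (if r₁ ≤ ‖ξ - z‖ then ENNReal.ofReal (‖ξ - z‖^3)⁻¹ else 0) := by
          refine lintegral_mono fun ξ => ?_
          rw [indicator]
          by_cases hmem : ξ ∈ A
          · have h1 : r₁ ≤ dist ξ z := not_lt.mp (fun hcon => hmem.2 (mem_ball.mpr hcon))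
            rw [if_pos hmem, if_pos (by rwa [← dist_eq_norm]), dist_eq_norm]
          · rw [if_neg hmem]
            exact zero_le
      _ = 2 * c * ENNReal.ofReal r₁⁻¹ := by
          rw [lintegral_sub_right_eq_self
            (fun x : ℂ => (if r₁ ≤ ‖x‖ then ENNReal.ofReal (‖x‖^3)⁻¹ else 0)) z,
            lintegral_compl_ball_inv_cube r₁ hr₁]
      _ = ENNReal.ofReal (cR * r₁⁻¹) := by rw [h2c, ← ENNReal.ofReal_mul hcR0]
      _ < ENNReal.ofReal (ε/3) := by
          rw [ENNReal.ofReal_lt_ofReal_iff (by positivity)]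
          rw [hr₁def, inv_div, mul_div_assoc', div_lt_div_iff₀ (by positivity) (by norm_num)]
          nlinarith
  -- annulus piece 2
  have hB2 : (∫⁻ ξ in A, ENNReal.ofReal (dist ξ z * ‖fderiv ℝ ω ξ‖ ^ 2))
      < ENNReal.ofReal (ε/3) := by
    have hsub : A ⊆ {ξ : ℂ | ‖z‖/5 ≤ ‖ξ‖} ∩ T := by
      intro ξ hξ
      have h5 := hdistlow ξ hξ.1
      exact ⟨h5, lt_of_lt_of_le hzR₀ h5⟩
    calc (∫⁻ ξ in A, ENNReal.ofReal (dist ξ z * ‖fderiv ℝ ω ξ‖ ^ 2))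
        ≤ ∫⁻ ξ in A, ENNReal.ofReal (4 * (‖ξ‖ * ‖fderiv ℝ ω ξ‖ ^ 2)) := by
          refine setLIntegral_mono' hAm fun ξ hξ => ENNReal.ofReal_le_ofReal ?_
          have h5 := hdistlow ξ hξ.1
          have hd : dist ξ z ≤ 4 * ‖ξ‖ := by
            have := mem_closedBall.mp hξ.1
            linarith
          calc dist ξ z * ‖fderiv ℝ ω ξ‖ ^ 2 ≤ (4 * ‖ξ‖) * ‖fderiv ℝ ω ξ‖ ^ 2 :=
                mul_le_mul_of_nonneg_right hd (by positivity)
            _ = 4 * (‖ξ‖ * ‖fderiv ℝ ω ξ‖ ^ 2) := by ring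
      _ ≤ ∫⁻ ξ in {ξ : ℂ | ‖z‖/5 ≤ ‖ξ‖} ∩ T,
            ENNReal.ofReal (4 * (‖ξ‖ * ‖fderiv ℝ ω ξ‖ ^ 2)) := lintegral_mono_set hsub
      _ = 4 * ∫⁻ ξ in {ξ : ℂ | ‖z‖/5 ≤ ‖ξ‖} ∩ T, h ξ := by
          simp_rw [ENNReal.ofReal_mul (by norm_num : (0:ℝ) ≤ 4), ENNReal.ofReal_ofNat]
          exact lintegral_const_mul' _ _ (by norm_num)
      _ < 4 * ENNReal.ofReal (ε/12) := by
          exact (ENNReal.mul_lt_mul_iff_right (by norm_num) (by norm_num)).mpr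
            (hS₀ (‖z‖/5) hz5S₀)
      _ = ENNReal.ofReal (ε/3) := by
          rw [← ENNReal.ofReal_ofNat, ← ENNReal.ofReal_mul (by norm_num)]
          congr 1
          ring
  -- assemble
  have hL : (∫⁻ ξ in D, ENNReal.ofReal (1 / dist ξ z * ‖fderiv ℝ ω ξ‖))
      < ENNReal.ofReal ε := by
    calc (∫⁻ ξ in D, ENNReal.ofReal (1 / dist ξ z * ‖fderiv ℝ ω ξ‖))
        ≤ ∫⁻ ξ in ball z r₁ ∪ A, ENNReal.ofReal (1 / dist ξ z * ‖fderiv ℝ ω ξ‖) := by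
          refine lintegral_mono_set fun ξ hξ => ?_
          by_cases hb : ξ ∈ ball z r₁
          · exact Or.inl hb
          · exact Or.inr ⟨hξ, hb⟩
      _ ≤ (∫⁻ ξ in ball z r₁, ENNReal.ofReal (1 / dist ξ z * ‖fderiv ℝ ω ξ‖))
            + ∫⁻ ξ in A, ENNReal.ofReal (1 / dist ξ z * ‖fderiv ℝ ω ξ‖) :=
          lintegral_union_le _ _ _
      _ ≤ (∫⁻ ξ in ball z r₁, ENNReal.ofReal (1 / dist ξ z * ‖fderiv ℝ ω ξ‖))
            + ((∫⁻ ξ in A, ENNReal.ofReal ((dist ξ z ^ 3)⁻¹))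
              + ∫⁻ ξ in A, ENNReal.ofReal (dist ξ z * ‖fderiv ℝ ω ξ‖ ^ 2)) :=
          add_le_add_right hannsplit _
      _ < ENNReal.ofReal (ε/3) + (ENNReal.ofReal (ε/3) + ENNReal.ofReal (ε/3)) :=
          ENNReal.add_lt_add hball (ENNReal.add_lt_add hB1 hB2)
      _ = ENNReal.ofReal ε := by
          rw [← ENNReal.ofReal_add (by positivity) (by positivity),
            ← ENNReal.ofReal_add (by positivity) (by positivity)]
          norm_num
          ring_nf
  rw [hDset, integral_eq_lintegral_of_nonneg_ae
    (ae_of_all _ fun ξ => by positivity) hfm.aestronglyMeasurable]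
  exact ENNReal.toReal_lt_of_lt_ofReal hL
end

section
/- Let $\mathbf{u}$ be a continuous bounded vector field on $\{z \in \mathbb{R}^2 : |z| > R_0\}$, and $\mathbf{u}_\infty \in \mathbb{R}^2$. Suppose: (a) there is a sequence of radii $R_n \in (2^n, 2^{n+1})$ with $\sup_{|\xi| = R_n} |\mathbf{u}(\xi) - \mathbf{u}_\infty| \to 0$ as $n \to \infty$; (b) $\sup_{0 < \rho \le \frac{4}{5}|z|} |\mathbf{u}(z) - \bar{\mathbf{u}}(z, \rho)| \to 0$ uniformly as $|z| \to \infty$, where $\bar{\mathbf{u}}(z,\rho)$ is the circle average; and (c) for each $z$ with large $|z|$ there exists $\rho_* \in (\frac{3}{4}|z|, \frac{4}{5}|z|)$ with $\sup_{|\xi - z| = \rho_*} |\mathbf{u}(\xi) - \bar{\mathbf{u}}(z, \rho_*)| = \varepsilon_z \to 0$ uniformly. Then $\mathbf{u}(z) \to \mathbf{u}_\infty$ uniformly as $|z| \to \infty$. -/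
open MeasureTheory Real Set Filter

/-- Mean value of a planar vector field over the circle of radius `ρ` centered at `z`. -/
noncomputable def circleAvgC (u : ℂ → ℂ) (z : ℂ) (ρ : ℝ) : ℂ :=
  (2 * Real.pi)⁻¹ • ∫ θ in (0:ℝ)..(2 * Real.pi), u (z + ρ * Complex.exp (θ * Complex.I))

/-- The concluding argument of Lemma 3.3(ii): from (a) convergence `u → u∞` on a
dyadic sequence of circles `|ξ| = Rₙ ∈ (2ⁿ, 2ⁿ⁺¹)`, (b) uniform closeness of `u(z)` to
all its circle averages `ū(z,ρ)` with `0 < ρ ≤ (4/5)|z|`, and (c) for each large `z`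
some circle `|ξ - z| = ρ*`, `ρ* ∈ ((3/4)|z|, (4/5)|z|)`, on which `u` is uniformly
close to `ū(z,ρ*)`, it follows that `u(z) → u∞` uniformly as `|z| → ∞`. -/
theorem uniform_convergence_of_velocity
    (u : ℂ → ℂ) (uinf : ℂ) (R₀ C : ℝ)
    (hcont : ContinuousOn u {z : ℂ | R₀ < ‖z‖})
    (hbound : ∀ z : ℂ, R₀ < ‖z‖ → ‖u z‖ ≤ C)
    (Rseq : ℕ → ℝ) (hRseq : ∀ n : ℕ, Rseq n ∈ Set.Ioo ((2:ℝ) ^ n) ((2:ℝ) ^ (n + 1)))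
    (hseq : ∀ ε > (0:ℝ), ∃ N : ℕ, ∀ n ≥ N, ∀ ξ : ℂ, ‖ξ‖ = Rseq n → ‖u ξ - uinf‖ < ε)
    (havg : ∀ ε > (0:ℝ), ∃ R : ℝ, ∀ z : ℂ, R ≤ ‖z‖ →
      ∀ ρ : ℝ, 0 < ρ → ρ ≤ 4 / 5 * ‖z‖ → ‖u z - circleAvgC u z ρ‖ < ε)
    (hcirc : ∀ ε > (0:ℝ), ∃ R : ℝ, ∀ z : ℂ, R ≤ ‖z‖ →
      ∃ ρstar ∈ Set.Ioo (3 / 4 * ‖z‖) (4 / 5 * ‖z‖),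
        ∀ ξ : ℂ, dist ξ z = ρstar → ‖u ξ - circleAvgC u z ρstar‖ < ε) :
    ∀ ε > (0:ℝ), ∃ R : ℝ, ∀ z : ℂ, R ≤ ‖z‖ → ‖u z - uinf‖ < ε := by
  intro ε hε
  have hε3 : (0:ℝ) < ε / 3 := by linarith
  obtain ⟨N, hN⟩ := hseq (ε / 3) hε3
  obtain ⟨R₁, hR₁⟩ := havg (ε / 3) hε3
  obtain ⟨R₂, hR₂⟩ := hcirc (ε / 3) hε3
  refine ⟨max (max R₁ R₂) ((2:ℝ) ^ (N + 1)), fun z hz => ?_⟩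
  set d := ‖z‖ with hd
  have hzR₁ : R₁ ≤ d := le_trans (le_trans (le_max_left _ _) (le_max_left _ _)) hz
  have hzR₂ : R₂ ≤ d := le_trans (le_trans (le_max_right _ _) (le_max_left _ _)) hz
  have hz2 : (2:ℝ) ^ (N + 1) ≤ d := le_trans (le_max_right _ _) hz
  have hd1 : (1:ℝ) ≤ d := le_trans (one_le_pow₀ one_le_two) hz2
  have hd0 : (0:ℝ) < d := lt_of_lt_of_le one_pos hd1
  -- find n ≥ N with 2^(n+1) ≤ d < 2^(n+2)
  have hfloor : (2:ℕ) ^ (N + 1) ≤ ⌊d⌋₊ := by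
    refine Nat.le_floor ?_
    push_cast
    exact_mod_cast hz2
  set m := Nat.log 2 ⌊d⌋₊ with hm
  have hfl0 : ⌊d⌋₊ ≠ 0 := by
    have : (0:ℕ) < 2 ^ (N + 1) := by positivity
    omega
  have hm1 : N + 1 ≤ m := (Nat.le_log_iff_pow_le one_lt_two hfl0).mpr hfloor
  have hmlow : ((2:ℝ)) ^ m ≤ d := by
    have h1 : (2:ℕ) ^ m ≤ ⌊d⌋₊ := Nat.pow_log_le_self 2 hfl0
    have h2 : (⌊d⌋₊ : ℝ) ≤ d := Nat.floor_le hd0.le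
    calc ((2:ℝ)) ^ m = ((2:ℕ) ^ m : ℕ) := by push_cast; ring
      _ ≤ (⌊d⌋₊ : ℝ) := by exact_mod_cast h1
      _ ≤ d := h2
  have hmhigh : d < (2:ℝ) ^ (m + 1) := by
    have h1 : ⌊d⌋₊ < (2:ℕ) ^ (m + 1) := Nat.lt_pow_succ_log_self one_lt_two _
    have h2 : d < (⌊d⌋₊ : ℝ) + 1 := Nat.lt_floor_add_one d
    have h3 : (⌊d⌋₊ : ℝ) + 1 ≤ ((2:ℕ) ^ (m + 1) : ℕ) := by exact_mod_cast h1
    calc d < (⌊d⌋₊ : ℝ) + 1 := h2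
      _ ≤ ((2:ℕ) ^ (m + 1) : ℕ) := h3
      _ = (2:ℝ) ^ (m + 1) := by push_cast; ring
  set n := m - 1 with hn
  have hnsucc : n + 1 = m := Nat.succ_pred_eq_of_pos (Nat.lt_of_lt_of_le (Nat.succ_pos N) hm1)
  have hnN : N ≤ n := by omega
  obtain ⟨hr1, hr2⟩ := hRseq n
  set r := Rseq n with hr
  have hrlow : d / 4 < r := by
    have h4 : d < (2:ℝ) ^ (n + 2) := by
      have : m + 1 = n + 2 := by omega
      rw [← this]; exact hmhigh
    have : (2:ℝ) ^ (n + 2) = 4 * (2:ℝ) ^ n := by ring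
    nlinarith [hr1]
  have hrhigh : r < d := by
    have : (2:ℝ) ^ (n + 1) ≤ d := by rw [hnsucc]; exact hmlow
    linarith [hr2]
  have hr0 : (0:ℝ) < r := lt_trans (by positivity) hr1
  -- get ρ* from hcirc
  obtain ⟨ρ, ⟨hρ1, hρ2⟩, hρcirc⟩ := hR₂ z hzR₂
  have hρ0 : (0:ℝ) < ρ := lt_trans (by linarith) hρ1
  -- intersection point of the two circles
  set x := (d ^ 2 + r ^ 2 - ρ ^ 2) / (2 * d) with hx
  have hxr : x ^ 2 ≤ r ^ 2 := by
    have hle : x ≤ r := by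
      rw [hx, div_le_iff₀ (by positivity)]
      nlinarith [sq_nonneg (d - r)]
    have hge : -r ≤ x := by
      rw [hx, le_div_iff₀ (by positivity)]
      nlinarith [sq_nonneg (d + r)]
    nlinarith
  set y := Real.sqrt (r ^ 2 - x ^ 2) with hy
  have hy2 : y ^ 2 = r ^ 2 - x ^ 2 := Real.sq_sqrt (by linarith)
  have h2dx : 2 * d * x = d ^ 2 + r ^ 2 - ρ ^ 2 := by
    rw [hx]; field_simp
  clear_value d m n r x y
  set ξ₀ : ℂ := ((x : ℂ) + (y : ℂ) * Complex.I) * (z / (d : ℂ)) with hξ₀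
  have hzd : ‖z / (d : ℂ)‖ = 1 := by
    rw [norm_div, Complex.norm_real, Real.norm_of_nonneg hd0.le, ← hd]
    exact div_self hd0.ne'
  have habs : ∀ a b : ℝ, ‖(a : ℂ) + (b : ℂ) * Complex.I‖ = Real.sqrt (a ^ 2 + b ^ 2) := by
    intro a b
    rw [Complex.norm_def, Complex.normSq_apply]
    simp [pow_two]
  have hξnorm : ‖ξ₀‖ = r := by
    rw [hξ₀, norm_mul, hzd, mul_one, habs]
    rw [hy2]
    have : x ^ 2 + (r ^ 2 - x ^ 2) = r ^ 2 := by ring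
    rw [this, Real.sqrt_sq hr0.le]
  have hξdist : dist ξ₀ z = ρ := by
    have hzne : (d : ℂ) ≠ 0 := by exact_mod_cast hd0.ne'
    have hzeq : z = (d : ℂ) * (z / (d : ℂ)) := by field_simp
    have : ξ₀ - z = (((x - d) : ℝ) + (y : ℂ) * Complex.I) * (z / (d : ℂ)) := by
      rw [hξ₀]; nth_rewrite 2 [hzeq]; push_cast; ring
    rw [dist_eq_norm, this, norm_mul, hzd, mul_one, habs]
    have : (x - d) ^ 2 + y ^ 2 = ρ ^ 2 := by rw [hy2]; linear_combination (-1 : ℝ) * h2dx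
    rw [this, Real.sqrt_sq hρ0.le]
  -- chain the three estimates
  have e1 : ‖u z - circleAvgC u z ρ‖ < ε / 3 :=
    hR₁ z (hd ▸ hzR₁) ρ hρ0 (le_of_lt hρ2)
  have e2 : ‖u ξ₀ - circleAvgC u z ρ‖ < ε / 3 := hρcirc ξ₀ hξdist
  have e3 : ‖u ξ₀ - uinf‖ < ε / 3 := hN n hnN ξ₀ (by rw [hξnorm, hr])
  have key : u z - uinf = (u z - circleAvgC u z ρ) + (circleAvgC u z ρ - u ξ₀) + (u ξ₀ - uinf) := by
    ring
  calc ‖u z - uinf‖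
      = ‖(u z - circleAvgC u z ρ) + (circleAvgC u z ρ - u ξ₀) + (u ξ₀ - uinf)‖ := by rw [key]
    _ ≤ ‖u z - circleAvgC u z ρ‖ + ‖circleAvgC u z ρ - u ξ₀‖ + ‖u ξ₀ - uinf‖ := by
        exact norm_add₃_le
    _ < ε / 3 + ε / 3 + ε / 3 := by
        have e2' : ‖circleAvgC u z ρ - u ξ₀‖ < ε / 3 := by rw [norm_sub_rev]; exact e2
        exact add_lt_add (add_lt_add e1 e2') e3
    _ = ε := by ring
end
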